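/- The asymptotic clustering coefficient of a planar random Apollonian network (index k = 3), given by ∑_{j=3}^∞ [(2)(2j-3)/(j(j-1))] · [Γ(j)Γ(5)/(Γ(j+3)Γ(2))], equals 12π² − 353/3. -/

import Mathlib

open Real Filter Topology

lemma telesc (a : ℝ) (ha : 0 < a) :
    HasSum (fun n : ℕ => 1 / ((n + a) * (n + a + 1))) (1 / a) := by
  have hnn : ∀ n : ℕ, 0 ≤ 1 / ((n + a) * (n + a + 1)) := by
    intro n; positivity
  rw [hasSum_iff_tendsto_nat_of_nonneg hnn]
  have hps : ∀ N : ℕ, ∑ i ∈ Finset.range N, 1 / ((i + a) * (i + a + 1))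
      = 1 / a - 1 / (N + a) := by
    intro N
    have := Finset.sum_range_sub' (fun i : ℕ => 1 / ((i : ℝ) + a)) N
    rw [show (1:ℝ)/a - 1/(N+a) = 1/((0:ℕ)+a) - 1/((N:ℝ)+a) by norm_num, ← this]
    apply Finset.sum_congr rfl
    intro i _
    have h1 : (0:ℝ) < i + a := by positivity
    have h2 : (0:ℝ) < i + a + 1 := by positivity
    push_cast
    rw [show (i:ℝ) + 1 + a = (↑i + a) + 1 by ring, div_sub_div _ _ h1.ne' h2.ne',
      show (1:ℝ) * (↑i + a + 1) - (↑i + a) * 1 = 1 by ring]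
  simp only [hps]
  have : Tendsto (fun N : ℕ => 1 / ((N : ℝ) + a)) atTop (𝓝 0) := by
    have h := (tendsto_atTop_add_const_right atTop a tendsto_natCast_atTop_atTop).inv_tendsto_atTop
    simp only [one_div]; exact h
  simpa using (tendsto_const_nhds.sub this)

lemma basel_tail : HasSum (fun n : ℕ => (1:ℝ) / ((n:ℝ) + 3) ^ 2) (π ^ 2 / 6 - 5 / 4) := by
  have h : HasSum (fun n : ℕ => (1:ℝ) / (((n + 3 : ℕ)):ℝ) ^ 2) (π ^ 2 / 6 - 5 / 4) := by
    refine (hasSum_nat_add_iff (f := fun n : ℕ => (1:ℝ) / (n:ℝ) ^ 2) 3).mpr ?_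
    convert hasSum_zeta_two using 1
    · rfl
    rw [Finset.sum_range_succ, Finset.sum_range_succ, Finset.sum_range_succ]
    norm_num
  have he : ∀ n : ℕ, (1:ℝ) / ((n + 3 : ℕ):ℝ) ^ 2 = 1 / ((n:ℝ) + 3) ^ 2 := by
    intro n; push_cast; ring
  simpa only [he] using h

lemma pointwise (n : ℕ) :
    (2 * (2 * ((n + 3 : ℕ) : ℝ) - 3) / (((n + 3 : ℕ) : ℝ) * (((n + 3 : ℕ) : ℝ) - 1))) *
          (Real.Gamma ((n + 3 : ℕ) : ℝ) * Real.Gamma 5 /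
            (Real.Gamma (((n + 3 : ℕ) : ℝ) + 3) * Real.Gamma 2))
      = 72 * (1 / ((n:ℝ) + 3) ^ 2) - 8 * (1 / (((n:ℝ) + 2) * ((n:ℝ) + 2 + 1)))
        - 92 * (1 / (((n:ℝ) + 3) * ((n:ℝ) + 3 + 1)))
        + 28 * (1 / (((n:ℝ) + 4) * ((n:ℝ) + 4 + 1))) := by
  have hg1 : Real.Gamma ((n + 3 : ℕ) : ℝ) = Nat.factorial (n + 2) := by
    rw [show ((n + 3 : ℕ) : ℝ) = ((n + 2 : ℕ) : ℝ) + 1 by push_cast; ring,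
      Real.Gamma_nat_eq_factorial]
  have hg2 : Real.Gamma (((n + 3 : ℕ) : ℝ) + 3) = Nat.factorial (n + 5) := by
    rw [show ((n + 3 : ℕ) : ℝ) + 3 = ((n + 5 : ℕ) : ℝ) + 1 by push_cast; ring,
      Real.Gamma_nat_eq_factorial]
  have hg5 : Real.Gamma 5 = 24 := by
    rw [show (5:ℝ) = ((4 : ℕ) : ℝ) + 1 by norm_num, Real.Gamma_nat_eq_factorial]
    norm_num [Nat.factorial]
  have hfac : ((Nat.factorial (n + 5)) : ℝ) = ((n:ℝ) + 5) * ((n:ℝ) + 4) * ((n:ℝ) + 3) * (Nat.factorial (n + 2) : ℝ) := by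
    rw [show Nat.factorial (n+5) = (n+5) * ((n+4) * ((n+3) * Nat.factorial (n+2))) by
      simp [Nat.factorial_succ, show n+5 = (n+4)+1 from rfl, show n+4=(n+3)+1 from rfl, show n+3=(n+2)+1 from rfl]]
    push_cast; ring
  rw [hg1, hg2, hg5, Real.Gamma_two, hfac]
  have hf : (0:ℝ) < (Nat.factorial (n + 2) : ℝ) := by positivity
  have h2 : (0:ℝ) < (n:ℝ) + 2 := by positivity
  have h3 : (0:ℝ) < (n:ℝ) + 3 := by positivity
  have h4 : (0:ℝ) < (n:ℝ) + 4 := by positivity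
  have h5 : (0:ℝ) < (n:ℝ) + 5 := by positivity
  push_cast
  have h31 : (0:ℝ) < (n:ℝ) + 3 - 1 := by linarith
  field_simp [hf.ne', h2.ne', h3.ne', h4.ne', h5.ne']
  ring

theorem planar_ran_clustering_coefficient :
    ∑' j : ℕ,
        (2 * (2 * ((j + 3 : ℕ) : ℝ) - 3) / (((j + 3 : ℕ) : ℝ) * (((j + 3 : ℕ) : ℝ) - 1))) *
          (Real.Gamma ((j + 3 : ℕ) : ℝ) * Real.Gamma 5 /
            (Real.Gamma (((j + 3 : ℕ) : ℝ) + 3) * Real.Gamma 2))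
      = 12 * Real.pi ^ 2 - 353 / 3 := by
  have ht2 := telesc 2 (by norm_num)
  have ht3 := telesc 3 (by norm_num)
  have ht4 := telesc 4 (by norm_num)
  have hs := (((basel_tail.mul_left 72).sub (ht2.mul_left 8)).sub (ht3.mul_left 92)).add
    (ht4.mul_left 28)
  have hs' : HasSum (fun j : ℕ =>
      (2 * (2 * ((j + 3 : ℕ) : ℝ) - 3) / (((j + 3 : ℕ) : ℝ) * (((j + 3 : ℕ) : ℝ) - 1))) *
          (Real.Gamma ((j + 3 : ℕ) : ℝ) * Real.Gamma 5 /
            (Real.Gamma (((j + 3 : ℕ) : ℝ) + 3) * Real.Gamma 2)))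
      (12 * Real.pi ^ 2 - 353 / 3) := by
    convert hs using 1
    · rfl
    · funext n; exact pointwise n
    · ring
  exact hs'.tsum_eq
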